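/- In ℚ[M₄(ℤ)], with Φ, R as before (Φ = I + [[1,0,0,0],[0,1,1,0],[0,0,-1,0],[0,0,1,1]] + [[1,1,1,0],[0,-1,-1,0],[0,1,0,0],[0,0,1,1]], R = [[1,0,0,0],[0,1,0,0],[-1,-1,1,0],[0,0,0,1]]), C₄ = {e,(1234),(13)(24),(1432)}, J = diag(0,1,1,1), and T₂,T₃,T₄ = [[0,0,0,0],[0,1,0,0],[0,0,1,0],[0,1,1,1]], [[0,0,0,0],[0,1,0,0],[0,0,1,1],[0,1,1,0]], [[0,0,0,0],[0,1,1,0],[0,0,0,1],[0,1,0,0]], the identity (ΦR·∑_{σ∈C₄}σ)^{-∗}·J = (∑_{σ∈C₄}σ)·(234)·(T₂+T₃+T₄) holds, where (234) is the permutation matrix of the 3-cycle (234). -/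

import Mathlib

/-- 4×4 integer matrices. -/
abbrev M4 : Type := Matrix (Fin 4) (Fin 4) ℤ

/-- The ℚ-algebra spanned freely by 4×4 integer matrices (containing the group
ring ℚ[GL₄(ℤ)] as the span of the invertible matrices). -/
abbrev QM4 : Type := MonoidAlgebra ℚ M4

/-- The canonical embedding of a matrix into the monoid algebra. -/
noncomputable def emb (M : M4) : QM4 := MonoidAlgebra.single M 1

/-- Permutation matrix `(δ_{i σ(j)})` of `σ ∈ S₄`. -/
def pm (σ : Equiv.Perm (Fin 4)) : M4 := Matrix.of fun i j => if i = σ j then 1 else 0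

/-- The shuffle element sh(2,4) = ∑_{σ(1)<σ(2), σ(3)<σ(4)} σ. -/
noncomputable def sh24 : QM4 :=
  ∑ σ ∈ Finset.univ.filter (fun σ : Equiv.Perm (Fin 4) => σ 0 < σ 1 ∧ σ 2 < σ 3), emb (pm σ)

/-- The element Φ. -/
noncomputable def Phi : QM4 :=
  emb 1 + emb !![1,0,0,0; 0,1,1,0; 0,0,-1,0; 0,0,1,1]
    + emb !![1,1,1,0; 0,-1,-1,0; 0,1,0,0; 0,0,1,1]

/-- The element Ψ. -/
noncomputable def Psi : QM4 :=
  emb 1 + emb !![1,0,0,0; 0,1,0,0; 0,0,1,1; 0,0,0,-1]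
    + emb !![1,0,0,0; 0,1,1,1; 0,0,-1,-1; 0,0,1,0]
    + emb !![1,1,1,1; 0,-1,-1,-1; 0,1,0,0; 0,0,1,0]

/-- The inverse-star map: for Γ = ∑ aₖ Mₖ, Γ^{-∗} = ∑ aₖ Mₖ⁻¹. -/
noncomputable def invStar (Γ : QM4) : QM4 :=
  Finsupp.sum Γ.coeff (fun M a => MonoidAlgebra.single M⁻¹ a)

/-- The 4-cycle (1234) (on Fin 4: 0↦1↦2↦3↦0). -/
def c1234 : Equiv.Perm (Fin 4) := Equiv.swap 0 1 * Equiv.swap 1 2 * Equiv.swap 2 3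

/-- The sum ∑_{σ∈C₄} σ over the cyclic group C₄ = {e,(1234),(13)(24),(1432)}. -/
noncomputable def C4sum : QM4 :=
  emb 1 + emb (pm c1234) + emb (pm (c1234 ^ 2)) + emb (pm (c1234 ^ 3))

/-- J = diag(0,1,1,1). -/
def J : M4 := !![0,0,0,0; 0,1,0,0; 0,0,1,0; 0,0,0,1]

def T1 : M4 := !![0,0,0,0; 0,1,0,0; 0,1,1,0; 0,1,1,1]
def T2 : M4 := !![0,0,0,0; 0,1,0,0; 0,0,1,0; 0,1,1,1]
def T3 : M4 := !![0,0,0,0; 0,1,0,0; 0,0,1,1; 0,1,1,0]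
def T4 : M4 := !![0,0,0,0; 0,1,1,0; 0,0,0,1; 0,1,0,0]

/-- The 3-cycle (234) (on Fin 4: 1↦2↦3↦1). -/
def c234 : Equiv.Perm (Fin 4) := Equiv.swap 1 2 * Equiv.swap 2 3

lemma emb_mul (A B : M4) : emb A * emb B = emb (A * B) := by
  simp [emb, MonoidAlgebra.single_mul_single]

lemma invStar_add (x y : QM4) : invStar (x + y) = invStar x + invStar y := by
  unfold invStar
  exact Finsupp.sum_add_index' (fun M => by simp) (fun M a b => by simp [Finsupp.single_add])

lemma invStar_emb (M : M4) : invStar (emb M) = emb M⁻¹ := by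
  unfold invStar emb
  rw [MonoidAlgebra.coeff_single, Finsupp.sum_single_index] ; simp

noncomputable abbrev PA : M4 := !![1,0,0,0; 0,1,1,0; 0,0,-1,0; 0,0,1,1]
noncomputable abbrev PB : M4 := !![1,1,1,0; 0,-1,-1,0; 0,1,0,0; 0,0,1,1]
noncomputable abbrev Rm : M4 := !![1,0,0,0; 0,1,0,0; -1,-1,1,0; 0,0,0,1]

lemma hm1 : (1 : M4) * Rm * (1 : M4) = !![1,0,0,0; 0,1,0,0; -1,-1,1,0; 0,0,0,1] := by decide
lemma hm2 : (1 : M4) * Rm * pm c1234 = !![0,0,0,1; 1,0,0,0; -1,1,0,-1; 0,0,1,0] := by decide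
lemma hm3 : (1 : M4) * Rm * pm (c1234^2) = !![0,0,1,0; 0,0,0,1; 1,0,-1,-1; 0,1,0,0] := by decide
lemma hm4 : (1 : M4) * Rm * pm (c1234^3) = !![0,1,0,0; 0,0,1,0; 0,-1,-1,1; 1,0,0,0] := by decide
lemma hm5 : PA * Rm * (1 : M4) = !![1,0,0,0; -1,0,1,0; 1,1,-1,0; -1,-1,1,1] := by decide
lemma hm6 : PA * Rm * pm c1234 = !![0,0,0,1; 0,1,0,-1; 1,-1,0,1; -1,1,1,-1] := by decide
lemma hm7 : PA * Rm * pm (c1234^2) = !![0,0,1,0; 1,0,-1,0; -1,0,1,1; 1,1,-1,-1] := by decide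
lemma hm8 : PA * Rm * pm (c1234^3) = !![0,1,0,0; 0,-1,0,1; 0,1,1,-1; 1,-1,-1,1] := by decide
lemma hm9 : PB * Rm * (1 : M4) = !![0,0,1,0; 1,0,-1,0; 0,1,0,0; -1,-1,1,1] := by decide
lemma hm10 : PB * Rm * pm c1234 = !![0,1,0,0; 0,-1,0,1; 1,0,0,0; -1,1,1,-1] := by decide
lemma hm11 : PB * Rm * pm (c1234^2) = !![1,0,0,0; -1,0,1,0; 0,0,0,1; 1,1,-1,-1] := by decide
lemma hm12 : PB * Rm * pm (c1234^3) = !![0,0,0,1; 0,1,0,-1; 0,0,1,0; 1,-1,-1,1] := by decide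
lemma hi1 : (!![1,0,0,0; 0,1,0,0; -1,-1,1,0; 0,0,0,1] : M4)⁻¹ = !![1,0,0,0; 0,1,0,0; 1,1,1,0; 0,0,0,1] := Matrix.inv_eq_left_inv (by decide)
lemma hi2 : (!![0,0,0,1; 1,0,0,0; -1,1,0,-1; 0,0,1,0] : M4)⁻¹ = !![0,1,0,0; 1,1,1,0; 0,0,0,1; 1,0,0,0] := Matrix.inv_eq_left_inv (by decide)
lemma hi3 : (!![0,0,1,0; 0,0,0,1; 1,0,-1,-1; 0,1,0,0] : M4)⁻¹ = !![1,1,1,0; 0,0,0,1; 1,0,0,0; 0,1,0,0] := Matrix.inv_eq_left_inv (by decide)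
lemma hi4 : (!![0,1,0,0; 0,0,1,0; 0,-1,-1,1; 1,0,0,0] : M4)⁻¹ = !![0,0,0,1; 1,0,0,0; 0,1,0,0; 1,1,1,0] := Matrix.inv_eq_left_inv (by decide)
lemma hi5 : (!![1,0,0,0; -1,0,1,0; 1,1,-1,0; -1,-1,1,1] : M4)⁻¹ = !![1,0,0,0; 0,1,1,0; 1,1,0,0; 0,0,1,1] := Matrix.inv_eq_left_inv (by decide)
lemma hi6 : (!![0,0,0,1; 0,1,0,-1; 1,-1,0,1; -1,1,1,-1] : M4)⁻¹ = !![0,1,1,0; 1,1,0,0; 0,0,1,1; 1,0,0,0] := Matrix.inv_eq_left_inv (by decide)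
lemma hi7 : (!![0,0,1,0; 1,0,-1,0; -1,0,1,1; 1,1,-1,-1] : M4)⁻¹ = !![1,1,0,0; 0,0,1,1; 1,0,0,0; 0,1,1,0] := Matrix.inv_eq_left_inv (by decide)
lemma hi8 : (!![0,1,0,0; 0,-1,0,1; 0,1,1,-1; 1,-1,-1,1] : M4)⁻¹ = !![0,0,1,1; 1,0,0,0; 0,1,1,0; 1,1,0,0] := Matrix.inv_eq_left_inv (by decide)
lemma hi9 : (!![0,0,1,0; 1,0,-1,0; 0,1,0,0; -1,-1,1,1] : M4)⁻¹ = !![1,1,0,0; 0,0,1,0; 1,0,0,0; 0,1,1,1] := Matrix.inv_eq_left_inv (by decide)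
lemma hi10 : (!![0,1,0,0; 0,-1,0,1; 1,0,0,0; -1,1,1,-1] : M4)⁻¹ = !![0,0,1,0; 1,0,0,0; 0,1,1,1; 1,1,0,0] := Matrix.inv_eq_left_inv (by decide)
lemma hi11 : (!![1,0,0,0; -1,0,1,0; 0,0,0,1; 1,1,-1,-1] : M4)⁻¹ = !![1,0,0,0; 0,1,1,1; 1,1,0,0; 0,0,1,0] := Matrix.inv_eq_left_inv (by decide)
lemma hi12 : (!![0,0,0,1; 0,1,0,-1; 0,0,1,0; 1,-1,-1,1] : M4)⁻¹ = !![0,1,1,1; 1,1,0,0; 0,0,1,0; 1,0,0,0] := Matrix.inv_eq_left_inv (by decide)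
lemma hj1 : (!![1,0,0,0; 0,1,0,0; 1,1,1,0; 0,0,0,1] : M4) * J = !![0,0,0,0; 0,1,0,0; 0,1,1,0; 0,0,0,1] := by decide
lemma hj2 : (!![0,1,0,0; 1,1,1,0; 0,0,0,1; 1,0,0,0] : M4) * J = !![0,1,0,0; 0,1,1,0; 0,0,0,1; 0,0,0,0] := by decide
lemma hj3 : (!![1,1,1,0; 0,0,0,1; 1,0,0,0; 0,1,0,0] : M4) * J = !![0,1,1,0; 0,0,0,1; 0,0,0,0; 0,1,0,0] := by decide
lemma hj4 : (!![0,0,0,1; 1,0,0,0; 0,1,0,0; 1,1,1,0] : M4) * J = !![0,0,0,1; 0,0,0,0; 0,1,0,0; 0,1,1,0] := by decide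
lemma hj5 : (!![1,0,0,0; 0,1,1,0; 1,1,0,0; 0,0,1,1] : M4) * J = !![0,0,0,0; 0,1,1,0; 0,1,0,0; 0,0,1,1] := by decide
lemma hj6 : (!![0,1,1,0; 1,1,0,0; 0,0,1,1; 1,0,0,0] : M4) * J = !![0,1,1,0; 0,1,0,0; 0,0,1,1; 0,0,0,0] := by decide
lemma hj7 : (!![1,1,0,0; 0,0,1,1; 1,0,0,0; 0,1,1,0] : M4) * J = !![0,1,0,0; 0,0,1,1; 0,0,0,0; 0,1,1,0] := by decide
lemma hj8 : (!![0,0,1,1; 1,0,0,0; 0,1,1,0; 1,1,0,0] : M4) * J = !![0,0,1,1; 0,0,0,0; 0,1,1,0; 0,1,0,0] := by decide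
lemma hj9 : (!![1,1,0,0; 0,0,1,0; 1,0,0,0; 0,1,1,1] : M4) * J = !![0,1,0,0; 0,0,1,0; 0,0,0,0; 0,1,1,1] := by decide
lemma hj10 : (!![0,0,1,0; 1,0,0,0; 0,1,1,1; 1,1,0,0] : M4) * J = !![0,0,1,0; 0,0,0,0; 0,1,1,1; 0,1,0,0] := by decide
lemma hj11 : (!![1,0,0,0; 0,1,1,1; 1,1,0,0; 0,0,1,0] : M4) * J = !![0,0,0,0; 0,1,1,1; 0,1,0,0; 0,0,1,0] := by decide
lemma hj12 : (!![0,1,1,1; 1,1,0,0; 0,0,1,0; 1,0,0,0] : M4) * J = !![0,1,1,1; 0,1,0,0; 0,0,1,0; 0,0,0,0] := by decide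
lemma hr1 : (1 : M4) * pm c234 * T2 = !![0,0,0,0; 0,1,1,1; 0,1,0,0; 0,0,1,0] := by decide
lemma hr2 : (1 : M4) * pm c234 * T3 = !![0,0,0,0; 0,1,1,0; 0,1,0,0; 0,0,1,1] := by decide
lemma hr3 : (1 : M4) * pm c234 * T4 = !![0,0,0,0; 0,1,0,0; 0,1,1,0; 0,0,0,1] := by decide
lemma hr4 : pm c1234 * pm c234 * T2 = !![0,0,1,0; 0,0,0,0; 0,1,1,1; 0,1,0,0] := by decide
lemma hr5 : pm c1234 * pm c234 * T3 = !![0,0,1,1; 0,0,0,0; 0,1,1,0; 0,1,0,0] := by decide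
lemma hr6 : pm c1234 * pm c234 * T4 = !![0,0,0,1; 0,0,0,0; 0,1,0,0; 0,1,1,0] := by decide
lemma hr7 : pm (c1234^2) * pm c234 * T2 = !![0,1,0,0; 0,0,1,0; 0,0,0,0; 0,1,1,1] := by decide
lemma hr8 : pm (c1234^2) * pm c234 * T3 = !![0,1,0,0; 0,0,1,1; 0,0,0,0; 0,1,1,0] := by decide
lemma hr9 : pm (c1234^2) * pm c234 * T4 = !![0,1,1,0; 0,0,0,1; 0,0,0,0; 0,1,0,0] := by decide
lemma hr10 : pm (c1234^3) * pm c234 * T2 = !![0,1,1,1; 0,1,0,0; 0,0,1,0; 0,0,0,0] := by decide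
lemma hr11 : pm (c1234^3) * pm c234 * T3 = !![0,1,1,0; 0,1,0,0; 0,0,1,1; 0,0,0,0] := by decide
lemma hr12 : pm (c1234^3) * pm c234 * T4 = !![0,1,0,0; 0,1,1,0; 0,0,0,1; 0,0,0,0] := by decide

/-- (ΦR·∑_{σ∈C₄}σ)^{-∗}·J = (∑_{σ∈C₄}σ)·(234)·(T₂+T₃+T₄) in ℚ[M₄(ℤ)]. -/
theorem lem_2_2_eq3 :
    invStar (Phi * emb !![1,0,0,0; 0,1,0,0; -1,-1,1,0; 0,0,0,1] * C4sum) * emb J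
      = C4sum * emb (pm c234) * (emb T2 + emb T3 + emb T4) := by
  have hR : (!![1,0,0,0; 0,1,0,0; -1,-1,1,0; 0,0,0,1] : M4) = Rm := rfl
  rw [hR]
  simp only [Phi, C4sum, add_mul, mul_add, emb_mul,
    hm1, hm2, hm3, hm4, hm5, hm6, hm7, hm8, hm9, hm10, hm11, hm12,
    invStar_add, invStar_emb,
    hi1, hi2, hi3, hi4, hi5, hi6, hi7, hi8, hi9, hi10, hi11, hi12,
    hj1, hj2, hj3, hj4, hj5, hj6, hj7, hj8, hj9, hj10, hj11, hj12,
    hr1, hr2, hr3, hr4, hr5, hr6, hr7, hr8, hr9, hr10, hr11, hr12]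
  abel
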